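/- Let q be a prime and let g be a completely multiplicative complex-valued function with |g(q)| ≤ 1. Define w = 1 + q^{−e}·2·Re((g(q) − 1)/(q − g(q))) for a fixed positive integer e. If |w| = 1 and w is real (hence w = ±1), then g(q) = 1. -/

import Mathlib

/-- If `w = 1 + q^{-e}·2·Re((z-1)/(q-z))` has `|w| = 1` (with `z = g(q)`, `|z| ≤ 1`),
then `z = 1`. -/
theorem stmt_10 (q : ℕ) (hq : q.Prime) (e : ℕ) (he : 1 ≤ e) (g : ℕ → ℂ)
    (hgmul : ∀ m n : ℕ, g (m * n) = g m * g n) (hg : ‖g q‖ ≤ 1)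
    (w : ℝ) (hw : w = 1 + ((q : ℝ) ^ e)⁻¹ * 2 * (((g q - 1) / ((q : ℂ) - g q)).re))
    (hw1 : |w| = 1) : g q = 1 := by
  set z := g q with hz
  set Q : ℝ := (q : ℝ) with hQdef
  have hQ : (2 : ℝ) ≤ Q := by rw [hQdef]; exact_mod_cast hq.two_le
  have hab : z.re ^ 2 + z.im ^ 2 ≤ 1 := by
    have h2 : Complex.normSq z ≤ 1 := by
      have := Complex.normSq_eq_norm_sq z
      rw [this]
      calc ‖z‖ ^ 2 ≤ 1 ^ 2 := by
            apply pow_le_pow_left₀ (norm_nonneg z) hg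
      _ = 1 := one_pow 2
    simpa [Complex.normSq_apply, sq] using h2
  set a := z.re with hadef
  set b := z.im with hbdef
  have ha1 : a ≤ 1 := by nlinarith [sq_nonneg b]
  set D : ℝ := (Q - a) ^ 2 + b ^ 2 with hDdef
  have hDpos : 0 < D := by nlinarith [sq_nonneg b]
  set t : ℝ := ((z - 1) / ((q : ℂ) - z)).re with htdef
  have ht : t = (-(1 - a) * (Q - a) - b ^ 2) / D := by
    rw [htdef, Complex.div_re, Complex.normSq_apply]
    simp only [Complex.sub_re, Complex.sub_im, Complex.one_re, Complex.one_im,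
      Complex.natCast_re, Complex.natCast_im, ← hQdef, ← hadef, ← hbdef]
    rw [← add_div]
    congr 1
    · ring
    · rw [hDdef]; ring
  have htub : t ≤ 0 := by
    rw [ht]
    apply div_nonpos_of_nonpos_of_nonneg _ hDpos.le
    nlinarith [sq_nonneg b]
  have htlb : -1 < t := by
    rw [ht, lt_div_iff₀ hDpos]
    nlinarith
  have hi : 0 < (Q ^ e)⁻¹ := by positivity
  have hQe : (2 : ℝ) ≤ Q ^ e := le_trans hQ (le_self_pow₀ (by linarith) (by omega))
  have hi2 : (Q ^ e)⁻¹ ≤ 1 / 2 := by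
    rw [inv_le_comm₀ (by positivity) (by norm_num)]
    linarith
  have hwpos : 0 < w := by
    have h1 : (Q ^ e)⁻¹ * (-1) < (Q ^ e)⁻¹ * t := by
      exact mul_lt_mul_of_pos_left htlb hi
    rw [hw]
    push_cast [← hQdef]
    nlinarith
  have hw1' : w = 1 := by
    rcases abs_eq (by norm_num : (0:ℝ) ≤ 1) |>.mp hw1 with h | h
    · exact h
    · linarith
  have ht0 : t = 0 := by
    rw [hw] at hw1'
    have : (Q ^ e)⁻¹ * 2 * t = 0 := by linarith
    rcases mul_eq_zero.mp this with h | h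
    · exact absurd h (by positivity)
    · exact h
  have hN : -(1 - a) * (Q - a) - b ^ 2 = 0 := by
    have := ht0
    rw [ht, div_eq_zero_iff] at this
    rcases this with h | h
    · exact h
    · exact absurd h hDpos.ne'
  have hprod : 0 ≤ (1 - a) * (Q - a) :=
    mul_nonneg (by linarith) (by linarith)
  have hb2 : b ^ 2 = 0 := by nlinarith
  have hb0 : b = 0 := pow_eq_zero_iff (two_ne_zero) |>.mp hb2
  have h0 : (1 - a) * (Q - a) = 0 := by linear_combination -hN - hb2
  have ha : a = 1 := by
    rcases mul_eq_zero.mp h0 with h | h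
    · linarith
    · linarith
  rw [hz]
  apply Complex.ext
  · simpa [← hadef] using ha
  · simpa [← hbdef] using hb0
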